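/- For all integers m ≥ j ≥ 0, ∑_{k=0}^{j} e_k(−α_1, −α_2, …, −α_m) · h_{j−k}(α_1, α_2, …, α_{m−j+1}) equals 1 if j = 0 and equals 0 if j > 0. -/

import Mathlib

variable {R : Type*} [CommRing R]

/-- Elementary symmetric polynomial `e_m` of the entries of a list (zero for `m < 0`). -/
def esymL (l : List R) (m : ℤ) : R :=
  if 0 ≤ m then
    ∑ s ∈ Finset.powersetCard m.toNat (Finset.univ : Finset (Fin l.length)), ∏ i ∈ s, l.get i
  else 0

/-- Complete homogeneous symmetric polynomial `h_m` of the entries of a list (zero for `m < 0`). -/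
def hsymL (l : List R) (m : ℤ) : R :=
  if 0 ≤ m then
    ∑ s ∈ (Finset.univ : Finset (Fin l.length)).sym m.toNat, ((s.1).map l.get).prod
  else 0

/-- The list `f a, f (a+1), …, f b` (empty if `b < a`). -/
def intList (f : ℤ → R) (a b : ℤ) : List R :=
  (List.range (b + 1 - a).toNat).map (fun p => f (a + (p : ℤ)))

/-- `e_m(f a, …, f b)`. -/
def eI (f : ℤ → R) (a b m : ℤ) : R := esymL (intList f a b) m

/-- `h_m(f a, …, f b)`. -/
def hI (f : ℤ → R) (a b m : ℤ) : R := hsymL (intList f a b) m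

namespace CobAux

open Finset

/-- Recursive elementary symmetric function of a list. -/
def E : List R → ℕ → R
  | _, 0 => 1
  | [], _ + 1 => 0
  | x :: l, n + 1 => E l (n + 1) + x * E l n

/-- Recursive complete homogeneous symmetric function of a list. -/
def H : List R → ℕ → R
  | [], 0 => 1
  | [], _ + 1 => 0
  | x :: l, n => ∑ i ∈ Finset.range (n + 1), x ^ i * H l (n - i)

@[simp] lemma E_zero (l : List R) : E l 0 = 1 := by cases l <;> rfl

@[simp] lemma E_nil (n : ℕ) : E ([] : List R) n = if n = 0 then 1 else 0 := by
  cases n <;> rfl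

lemma E_cons (x : R) (l : List R) (n : ℕ) :
    E (x :: l) (n + 1) = E l (n + 1) + x * E l n := rfl

lemma E_eq_zero (l : List R) (n : ℕ) (h : l.length < n) : E l n = 0 := by
  induction l generalizing n with
  | nil =>
    cases n with
    | zero => omega
    | succ n => rfl
  | cons x l ih =>
    cases n with
    | zero => simp at h
    | succ n =>
      rw [E_cons, ih _ (by simp at h; omega), ih _ (by simp at h; omega)]
      ring

@[simp] lemma H_nil (n : ℕ) : H ([] : List R) n = if n = 0 then 1 else 0 := by
  cases n <;> rfl

lemma H_cons (x : R) (l : List R) (n : ℕ) :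
    H (x :: l) n = ∑ i ∈ Finset.range (n + 1), x ^ i * H l (n - i) := rfl

@[simp] lemma H_zero (l : List R) : H l 0 = 1 := by
  induction l with
  | nil => rfl
  | cons x l ih => simp [H_cons, ih]

lemma H_cons_succ (x : R) (l : List R) (n : ℕ) :
    H (x :: l) (n + 1) = x * H (x :: l) n + H l (n + 1) := by
  rw [H_cons, Finset.sum_range_succ' (fun i => x ^ i * H l (n + 1 - i))]
  simp only [pow_succ, pow_zero, one_mul, Nat.succ_sub_succ_eq_sub]
  rw [H_cons, Finset.mul_sum]
  congr 1
  refine Finset.sum_congr rfl fun i hi => ?_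
  ring

/-- `E` of the negated list. -/
lemma E_neg (l : List R) (n : ℕ) :
    E (l.map (fun y => -y)) n = (-1) ^ n * E l n := by
  induction l generalizing n with
  | nil => cases n <;> simp
  | cons x l ih =>
    cases n with
    | zero => simp
    | succ n =>
      simp only [List.map_cons, E_cons, ih]
      ring

/-- `E` of an append is a convolution. -/
lemma E_append (l l' : List R) (n : ℕ) :
    E (l ++ l') n = ∑ k ∈ Finset.range (n + 1), E l k * E l' (n - k) := by
  induction l generalizing n with
  | nil =>
    simp only [List.nil_append, E_nil]
    rw [Finset.sum_eq_single 0]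
    · simp
    · intro k hk hk0
      simp [hk0]
    · intro h
      simp at h
  | cons x l ih =>
    cases n with
    | zero => simp
    | succ n =>
      rw [List.cons_append, E_cons, ih, ih,
        Finset.sum_range_succ' (fun k => E (x :: l) k * E l' (n + 1 - k)),
        Finset.sum_range_succ' (fun k => E l k * E l' (n + 1 - k))]
      simp only [Nat.succ_sub_succ_eq_sub, E_cons, E_zero, one_mul, Nat.sub_zero]
      rw [Finset.mul_sum]
      rw [show (∑ k ∈ Finset.range (n + 1), (E l (k + 1) + x * E l k) * E l' (n - k))
          = ∑ k ∈ Finset.range (n + 1),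
              (E l (k + 1) * E l' (n - k) + x * (E l k * E l' (n - k))) from
        Finset.sum_congr rfl (fun k _ => by ring), Finset.sum_add_distrib]
      ring

/-- Orthogonality of `E` and `H` on the same list. -/
lemma orth (l : List R) (n : ℕ) :
    (∑ k ∈ Finset.range (n + 1), (-1) ^ k * E l k * H l (n - k))
      = if n = 0 then 1 else 0 := by
  induction l generalizing n with
  | nil =>
    rw [Finset.sum_eq_single 0]
    · simp
    · intro k hk hk0
      simp [hk0]
    · intro h; simp at h
  | cons x l ih =>
    induction n with
    | zero => simp
    | succ n ihn =>
      have key : ∀ k ∈ Finset.range (n + 1),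
          (-1) ^ k * E (x :: l) k * H (x :: l) (n + 1 - k)
            = x * ((-1) ^ k * E (x :: l) k * H (x :: l) (n - k))
              + (-1) ^ k * E (x :: l) k * H l (n + 1 - k) := by
        intro k hk
        rw [Finset.mem_range] at hk
        have h1 : n + 1 - k = (n - k) + 1 := by omega
        rw [h1, H_cons_succ]
        have h2 : n - k + 1 = n + 1 - k := by omega
        rw [h2]
        ring
      rw [Finset.sum_range_succ
          (fun k => (-1 : R) ^ k * E (x :: l) k * H (x :: l) (n + 1 - k)),
        Finset.sum_congr rfl key, Finset.sum_add_distrib, ← Finset.mul_sum, ihn]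
      have hT : (∑ k ∈ Finset.range (n + 1), (-1 : R) ^ k * E (x :: l) k * H l (n + 1 - k))
            + (-1) ^ (n + 1) * E (x :: l) (n + 1) * H (x :: l) (n + 1 - (n + 1))
          = (if n + 1 = 0 then (1 : R) else 0) - x * (if n = 0 then (1 : R) else 0) := by
        have h0 : H (x :: l) (n + 1 - (n + 1)) = 1 := by simp
        rw [h0, mul_one]
        have hsum : (∑ k ∈ Finset.range (n + 1),
              (-1 : R) ^ k * E (x :: l) k * H l (n + 1 - k))
              + (-1) ^ (n + 1) * E (x :: l) (n + 1)
            = ∑ k ∈ Finset.range (n + 2), (-1 : R) ^ k * E (x :: l) k * H l (n + 1 - k) := by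
          conv_rhs => rw [Finset.sum_range_succ]
          simp only [Nat.sub_self, H_zero, mul_one]
        rw [hsum, Finset.sum_range_succ'
          (fun k => (-1 : R) ^ k * E (x :: l) k * H l (n + 1 - k))]
        have expand : ∀ k ∈ Finset.range (n + 1),
            (-1 : R) ^ (k + 1) * E (x :: l) (k + 1) * H l (n + 1 - (k + 1))
              = -((-1) ^ k * E l (k + 1) * H l (n - k))
                - x * ((-1) ^ k * E l k * H l (n - k)) := by
          intro k hk
          rw [E_cons]
          simp only [Nat.succ_sub_succ_eq_sub]
          ring
        rw [Finset.sum_congr rfl expand, Finset.sum_sub_distrib, ← Finset.mul_sum, ih]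
        have hA : (∑ k ∈ Finset.range (n + 1), -((-1 : R) ^ k * E l (k + 1) * H l (n - k)))
              + (-1 : R) ^ 0 * E (x :: l) 0 * H l (n + 1 - 0)
            = if n + 1 = 0 then (1 : R) else 0 := by
          rw [← ih (n + 1), Finset.sum_range_succ'
            (fun k => (-1 : R) ^ k * E l k * H l (n + 1 - k))]
          congr 1
          · refine Finset.sum_congr rfl fun k hk => ?_
            simp only [Nat.succ_sub_succ_eq_sub]
            ring
          · simp
        rw [sub_add_eq_add_sub, hA]
      rw [add_assoc, hT]
      ring

/-! ### Relating the recursive definitions to `esymL` and `hsymL` -/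

lemma esymm_cons (a : R) (s : Multiset R) (n : ℕ) :
    Multiset.esymm (a ::ₘ s) (n + 1) = Multiset.esymm s (n + 1) + a * Multiset.esymm s n := by
  unfold Multiset.esymm
  rw [Multiset.powersetCard_cons, Multiset.map_add, Multiset.sum_add, Multiset.map_map]
  congr 1
  have : ∀ t ∈ Multiset.powersetCard n s,
      (Multiset.prod ∘ Multiset.cons a) t = a * t.prod := by
    intro t ht; simp
  rw [Multiset.map_congr rfl this, Multiset.sum_map_mul_left]

lemma esymm_coe_eq_E (l : List R) (n : ℕ) :
    Multiset.esymm (↑l : Multiset R) n = E l n := by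
  induction l generalizing n with
  | nil =>
    cases n with
    | zero => simp [Multiset.esymm]
    | succ n => simp [Multiset.esymm, Multiset.powersetCard_coe, Multiset.powersetCard_zero_right]
  | cons x l ih =>
    cases n with
    | zero => simp [Multiset.esymm]
    | succ n =>
      have : (↑(x :: l) : Multiset R) = x ::ₘ ↑l := rfl
      rw [this, esymm_cons, ih, ih, E_cons]

lemma esymL_eq (l : List R) (n : ℕ) :
    (∑ s ∈ Finset.powersetCard n (Finset.univ : Finset (Fin l.length)),
      ∏ i ∈ s, l.get i) = E l n := by
  rw [← Finset.esymm_map_val l.get Finset.univ n, ← esymm_coe_eq_E]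
  congr 1
  rw [Fin.univ_val_map, List.ofFn_get]

lemma esymL_eq' (l : List R) (m : ℤ) :
    esymL l m = if 0 ≤ m then E l m.toNat else 0 := by
  unfold esymL
  split
  · rw [esymL_eq]
  · rfl

/-- Transport the `h` sum along an embedding of index sets. -/
lemma hsum_map {α β : Type*} [DecidableEq α] [DecidableEq β] (e : α ↪ β) (s : Finset α)
    (f : β → R) (n : ℕ) :
    (∑ t ∈ (s.map e).sym n, ((t.1.map f).prod))
      = ∑ t ∈ s.sym n, ((t.1.map (f ∘ e)).prod) := by
  refine (Finset.sum_bij (fun t _ => t.map e) ?_ ?_ ?_ ?_).symm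
  · intro t ht
    rw [Finset.mem_sym_iff] at ht ⊢
    intro b hb
    rw [Sym.mem_map] at hb
    obtain ⟨a, ha, rfl⟩ := hb
    exact Finset.mem_map_of_mem e (ht a ha)
  · intro t1 h1 t2 h2 h
    exact Sym.map_injective e.injective _ h
  · intro t ht
    rw [Finset.mem_sym_iff] at ht
    -- build preimage of the underlying multiset
    have key : ∀ (u : Multiset β), (∀ b ∈ u, b ∈ s.map e) →
        ∃ v : Multiset α, (∀ a ∈ v, a ∈ s) ∧ v.map e = u := by
      intro u
      induction u using Multiset.induction_on with
      | empty => intro _; exact ⟨0, by simp, by simp⟩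
      | cons b u ihu =>
        intro h
        obtain ⟨v, hv, hvu⟩ := ihu (fun b hb => h b (Multiset.mem_cons_of_mem hb))
        obtain ⟨a, ha, rfl⟩ := Finset.mem_map.1 (h b (Multiset.mem_cons_self b u))
        exact ⟨a ::ₘ v, by
          intro a' ha'
          rcases Multiset.mem_cons.1 ha' with rfl | ha'
          · exact ha
          · exact hv a' ha', by simp [hvu]⟩
    obtain ⟨v, hv, hvu⟩ := key t.1 (fun b hb => ht b hb)
    have hcard : Multiset.card v = n := by
      have := t.2
      rw [← hvu, Multiset.card_map] at this
      exact this
    refine ⟨⟨v, hcard⟩, Finset.mem_sym_iff.2 (fun a ha => hv a ha), ?_⟩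
    exact Sym.coe_injective (by simpa [Sym.coe_map] using hvu)
  · intro t ht
    simp only [Sym.val_eq_coe, Sym.coe_map, Multiset.map_map]

lemma hsymL_eq (l : List R) (n : ℕ) :
    (∑ s ∈ (Finset.univ : Finset (Fin l.length)).sym n, ((s.1).map l.get).prod) = H l n := by
  induction l generalizing n with
  | nil =>
    cases n with
    | zero =>
      rw [Finset.sym_zero, Finset.sum_singleton]
      rfl
    | succ n =>
      rw [show (Finset.univ : Finset (Fin (List.length ([] : List R)))) = ∅ from rfl,
        Finset.sym_empty, Finset.sum_empty, H_nil]
      simp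
  | cons x l ih =>
    set emb : Fin l.length ↪ Fin (l.length + 1) := ⟨Fin.succ, Fin.succ_injective _⟩ with hemb
    have h0 : (0 : Fin (l.length + 1)) ∉ Finset.univ.map emb := by
      simp only [Finset.mem_map, hemb, Function.Embedding.coeFn_mk]
      rintro ⟨a, -, h⟩
      exact (Fin.succ_ne_zero a) h
    have huniv : (Finset.univ : Finset (Fin (l.length + 1)))
        = insert 0 (Finset.univ.map emb) := by
      rw [Fin.univ_succ, Finset.cons_eq_insert]
    set g : Sym (Fin (l.length + 1)) n → R := fun t => ((t.1).map (x :: l).get).prod with hg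
    have step1 : (∑ s ∈ (Finset.univ : Finset (Fin ((x :: l).length))).sym n,
          ((s.1).map (x :: l).get).prod)
        = ∑ t ∈ (insert (0 : Fin (l.length + 1)) (Finset.univ.map emb)).sym n, g t := by
      rw [← huniv]; rfl
    rw [step1, ← Finset.sum_coe_sort _ g,
      ← Equiv.sum_comp (Finset.symInsertEquiv h0).symm (fun t => g t.1),
      ← Finset.univ_sigma_univ, Finset.sum_sigma]
    have step2 : ∀ (i : Fin (n + 1))
        (t : {t // t ∈ (Finset.univ.map emb).sym (n - (i : ℕ))}),
        g (((Finset.symInsertEquiv h0).symm ⟨i, t⟩ : { t // t ∈ _ }) : Sym (Fin (l.length + 1)) n)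
          = x ^ (i : ℕ) * ((t.1.1).map (x :: l).get).prod := by
      intro i t
      have hc : (((Finset.symInsertEquiv h0).symm ⟨i, t⟩ :
            { t // t ∈ (insert (0 : Fin (l.length + 1)) (Finset.univ.map emb)).sym n }) :
            Sym (Fin (l.length + 1)) n) = Sym.fill 0 i t.1 := rfl
      rw [hg]
      simp only [hc, Sym.val_eq_coe]
      have hfill : ((Sym.fill (0 : Fin (l.length + 1)) i t.1) : Multiset (Fin (l.length + 1)))
          = ((t.1 : Sym (Fin (l.length + 1)) (n - (i : ℕ))) : Multiset (Fin (l.length + 1)))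
            + Multiset.replicate (i : ℕ) 0 :=
        Sym.coe_fill
      rw [hfill, Multiset.map_add, Multiset.prod_add, Multiset.map_replicate,
        Multiset.prod_replicate]
      have hx : (x :: l).get (0 : Fin (l.length + 1)) = x := rfl
      rw [hx, mul_comm]
    have step3 : ∀ i : Fin (n + 1),
        (∑ t ∈ (Finset.univ : Finset {t // t ∈ (Finset.univ.map emb).sym (n - (i : ℕ))}),
          g (((Finset.symInsertEquiv h0).symm ⟨i, t⟩ : { t // t ∈ _ }) :
            Sym (Fin (l.length + 1)) n))
          = x ^ (i : ℕ) * H l (n - (i : ℕ)) := by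
      intro i
      rw [Finset.sum_congr rfl (fun t _ => step2 i t)]
      rw [← Finset.mul_sum]
      congr 1
      rw [Finset.sum_coe_sort ((Finset.univ.map emb).sym (n - (i : ℕ)))
        (fun t => ((t.1).map (x :: l).get).prod)]
      rw [hsum_map emb Finset.univ (x :: l).get (n - (i : ℕ))]
      have hcomp : ((x :: l).get ∘ emb) = l.get := by
        funext a
        rfl
      rw [hcomp, ih]
    rw [Finset.sum_congr rfl (fun i _ => step3 i)]
    rw [H_cons, ← Fin.sum_univ_eq_sum_range (fun i => x ^ i * H l (n - i)) (n + 1)]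

lemma hsymL_eq' (l : List R) (m : ℤ) :
    hsymL l m = if 0 ≤ m then H l m.toNat else 0 := by
  unfold hsymL
  split
  · rw [hsymL_eq]
  · rfl

/-! ### intList lemmas -/

lemma flatmapcast (l : List ℕ) :
    (l.flatMap fun (a : ℕ) => ([(a : ℤ)] : List ℤ)) = l.map (fun (a : ℕ) => (a : ℤ)) := by
  induction l with
  | nil => rfl
  | cons x l ih => rw [List.flatMap_cons, ih]; rfl

lemma intList_eq (f : ℤ → R) (a b : ℤ) :
    intList f a b = (List.range (b + 1 - a).toNat).map (fun (p : ℕ) => f (a + (p : ℤ))) := by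
  show List.map _ ((List.range (b + 1 - a).toNat).flatMap fun (p : ℕ) => ([(p : ℤ)] : List ℤ)) = _
  rw [flatmapcast, List.map_map]
  rfl

lemma intList_length (f : ℤ → R) (a b : ℤ) : (intList f a b).length = (b + 1 - a).toNat := by
  rw [intList_eq, List.length_map, List.length_range]

lemma intList_append (f : ℤ → R) (a b c : ℤ) (h1 : a ≤ b + 1) (h2 : b ≤ c) :
    intList f a c = intList f a b ++ intList f (b + 1) c := by
  rw [intList_eq, intList_eq, intList_eq]
  have hsplit : (c + 1 - a).toNat = (b + 1 - a).toNat + (c + 1 - (b + 1)).toNat := by omega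
  rw [hsplit, List.range_add, List.map_append, List.map_map]
  congr 1
  refine List.map_congr_left fun p hp => ?_
  rw [List.mem_range] at hp
  simp only [Function.comp_apply]
  congr 1
  push_cast
  omega

lemma intList_neg (f : ℤ → R) (a b : ℤ) :
    intList (fun t => -f t) a b = (intList f a b).map (fun y => -y) := by
  rw [intList_eq, intList_eq, List.map_map]
  rfl

/-- Triangle sum swap. -/
lemma sum_triangle (f : ℕ → ℕ → R) (n : ℕ) :
    (∑ k ∈ Finset.range (n + 1), ∑ a ∈ Finset.range (k + 1), f a (k - a))
      = ∑ b ∈ Finset.range (n + 1), ∑ a ∈ Finset.range (n + 1 - b), f a b := by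
  induction n with
  | zero => simp
  | succ n ih =>
    rw [Finset.sum_range_succ
      (fun k => ∑ a ∈ Finset.range (k + 1), f a (k - a)), ih]
    have peel : ∀ b ∈ Finset.range (n + 2),
        (∑ a ∈ Finset.range (n + 2 - b), f a b)
          = (∑ a ∈ Finset.range (n + 1 - b), f a b) + f (n + 1 - b) b := by
      intro b hb
      rw [Finset.mem_range] at hb
      have h : n + 2 - b = (n + 1 - b) + 1 := by omega
      rw [h, Finset.sum_range_succ]
    rw [Finset.sum_congr rfl peel, Finset.sum_add_distrib]
    congr 1
    · symm
      rw [show n + 2 = (n + 1) + 1 from rfl, Finset.sum_range_succ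
        (fun b => ∑ a ∈ Finset.range (n + 1 - b), f a b)]
      simp
    · rw [← Finset.sum_range_reflect (fun a => f a (n + 1 - a)) (n + 2)]
      refine Finset.sum_congr rfl fun b hb => ?_
      rw [Finset.mem_range] at hb
      have h2 : n + 2 - 1 - b = n + 1 - b := by omega
      have h1 : n + 1 - (n + 1 - b) = b := by omega
      rw [h2, h1]

/-- The main ℕ-level computation. -/
lemma main_nat (A B : List R) (J : ℕ) (hJ : 1 ≤ J) (hB : B.length = J - 1) :
    (∑ k ∈ Finset.range (J + 1), (-1) ^ k * E (A ++ B) k * H A (J - k)) = 0 := by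
  have tri := sum_triangle (fun a b => (-1 : R) ^ (a + b) * E A a * E B b * H A (J - (a + b))) J
  have step1 : ∀ k ∈ Finset.range (J + 1),
      (-1 : R) ^ k * E (A ++ B) k * H A (J - k)
        = ∑ a ∈ Finset.range (k + 1),
            (-1 : R) ^ (a + (k - a)) * E A a * E B (k - a) * H A (J - (a + (k - a))) := by
    intro k hk
    rw [Finset.mem_range] at hk
    rw [E_append, Finset.mul_sum, Finset.sum_mul]
    refine Finset.sum_congr rfl fun a ha => ?_
    rw [Finset.mem_range] at ha
    have h1 : a + (k - a) = k := by omega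
    rw [h1]
    ring
  rw [Finset.sum_congr rfl step1, tri]
  have step2 : ∀ b ∈ Finset.range (J + 1),
      (∑ a ∈ Finset.range (J + 1 - b),
          (-1 : R) ^ (a + b) * E A a * E B b * H A (J - (a + b)))
        = (-1) ^ b * E B b * (if J - b = 0 then 1 else 0) := by
    intro b hb
    rw [Finset.mem_range] at hb
    have hr : J + 1 - b = (J - b) + 1 := by omega
    rw [hr, ← orth A (J - b), Finset.mul_sum]
    refine Finset.sum_congr rfl fun a ha => ?_
    rw [Finset.mem_range] at ha
    have h1 : J - (a + b) = (J - b) - a := by omega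
    rw [h1, pow_add]
    ring
  rw [Finset.sum_congr rfl step2]
  have step3 : ∀ b ∈ Finset.range (J + 1),
      (-1 : R) ^ b * E B b * (if J - b = 0 then 1 else 0)
        = if b = J then (-1) ^ b * E B b else 0 := by
    intro b hb
    rw [Finset.mem_range] at hb
    by_cases h : b = J
    · subst h
      simp
    · have : J - b ≠ 0 := by omega
      simp [h, this]
  rw [Finset.sum_congr rfl step3, Finset.sum_ite_eq' (Finset.range (J + 1)) J
    (fun b => (-1 : R) ^ b * E B b)]
  have : E B J = 0 := E_eq_zero B J (by omega)
  simp [this]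

end CobAux

/-- Corollary 2.7, second identity: for m ≥ j ≥ 0,
∑_{k=0}^{j} e_k(−α_1,…,−α_m) h_{j−k}(α_1,…,α_{m−j+1}) = δ_{j0}. -/
theorem product_cob_identity_second (α : ℤ → R) (m j : ℤ) (hj : 0 ≤ j) (hm : j ≤ m) :
    (∑ k ∈ Finset.Icc 0 j,
      eI (fun t => -α t) 1 m k * hI α 1 (m - j + 1) (j - k))
      = if j = 0 then 1 else 0 := by
  classical
  -- convert the ℤ-indexed sum to a ℕ-indexed sum
  set J := j.toNat with hJdef
  have hjJ : (J : ℤ) = j := Int.toNat_of_nonneg hj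
  have hmap : Finset.Icc (0 : ℤ) j
      = Finset.map ⟨((↑) : ℕ → ℤ), Nat.cast_injective⟩ (Finset.range (J + 1)) := by
    ext k
    simp only [Finset.mem_Icc, Finset.mem_map, Finset.mem_range, Function.Embedding.coeFn_mk]
    constructor
    · intro hk
      exact ⟨k.toNat, by omega, by omega⟩
    · rintro ⟨a, ha, rfl⟩
      omega
  have hIcc : ∀ (g : ℤ → R), (∑ k ∈ Finset.Icc 0 j, g k)
      = ∑ k ∈ Finset.range (J + 1), g (k : ℤ) := by
    intro g
    rw [hmap, Finset.sum_map]
    rfl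
  rw [hIcc]
  -- names for the lists
  set A := intList α 1 (m - j + 1) with hA
  set L := intList α 1 m with hL
  have hterm : ∀ k ∈ Finset.range (J + 1),
      eI (fun t => -α t) 1 m (k : ℤ) * hI α 1 (m - j + 1) (j - (k : ℤ))
        = ((-1) ^ k * CobAux.E L k) * CobAux.H A (J - k) := by
    intro k hk
    rw [Finset.mem_range] at hk
    have h1 : eI (fun t => -α t) 1 m (k : ℤ) = (-1) ^ k * CobAux.E L k := by
      unfold eI
      rw [CobAux.intList_neg, CobAux.esymL_eq']
      simp only [Int.ofNat_nonneg, if_true, Int.toNat_natCast]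
      rw [CobAux.E_neg]
    have h2 : hI α 1 (m - j + 1) (j - (k : ℤ)) = CobAux.H A (J - k) := by
      unfold hI
      rw [CobAux.hsymL_eq']
      have hnn : (0 : ℤ) ≤ j - (k : ℤ) := by omega
      rw [if_pos hnn]
      congr 1
      omega
    rw [h1, h2]
  rw [Finset.sum_congr rfl hterm]
  by_cases hj0 : j = 0
  · subst hj0
    have : J = 0 := by omega
    rw [this]
    simp
  · -- j ≥ 1
    have hJ1 : 1 ≤ J := by omega
    set B := intList α (m - j + 2) m with hB
    have hLAB : L = A ++ B := by
      rw [hL, hA, hB]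
      have := CobAux.intList_append α 1 (m - j + 1) m (by omega) (by omega)
      rw [this]
      congr 2
      omega
    have hBlen : B.length = J - 1 := by
      rw [hB, CobAux.intList_length]
      omega
    rw [if_neg hj0]
    calc (∑ k ∈ Finset.range (J + 1), ((-1) ^ k * CobAux.E L k) * CobAux.H A (J - k))
        = ∑ k ∈ Finset.range (J + 1), (-1) ^ k * CobAux.E (A ++ B) k * CobAux.H A (J - k) := by
          refine Finset.sum_congr rfl fun k hk => ?_
          rw [hLAB]
      _ = 0 := CobAux.main_nat A B J hJ1 hBlen
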